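/- Let φ = f + g with f : ℝⁿ → ℝ continuously differentiable and g : ℝⁿ → ℝ ∪ {∞} proper, lsc, convex. Suppose xᵏ → x⋆ ∈ argmin φ, that φ(xᵏ) → min φ, and let x̄ᵏ = prox_{γₖ g}(xᵏ − γₖ∇f(xᵏ)) with (γₖ) ⊂ ℝ₊₊ bounded and bounded away from zero. Then φ(x̄ᵏ) → min φ. -/

import Mathlib

open scoped RealInnerProductSpace
open Filter Topology

noncomputable section

def EProper {n : ℕ} (g : EuclideanSpace ℝ (Fin n) → EReal) : Prop :=
  (∀ x, g x ≠ ⊥) ∧ ∃ x, g x ≠ ⊤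

def EConvexOn {n : ℕ} (g : EuclideanSpace ℝ (Fin n) → EReal) : Prop :=
  ∀ x y : EuclideanSpace ℝ (Fin n), ∀ a b : ℝ, 0 ≤ a → 0 ≤ b → a + b = 1 →
    g (a • x + b • y) ≤ (a : EReal) * g x + (b : EReal) * g y

def IsProx {n : ℕ} (g : EuclideanSpace ℝ (Fin n) → EReal) (γ : ℝ)
    (y p : EuclideanSpace ℝ (Fin n)) : Prop :=
  ∀ z, g p + ((1 / (2 * γ) * ‖p - y‖ ^ 2 : ℝ) : EReal)
      ≤ g z + ((1 / (2 * γ) * ‖z - y‖ ^ 2 : ℝ) : EReal)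

set_option maxHeartbeats 2000000 in
/-- If `xᵏ → x⋆ ∈ argmin (f + g)` and `x̄ᵏ = prox_{γₖ g}(xᵏ − γₖ∇f(xᵏ))` with stepsizes
bounded and bounded away from zero, then `x̄ᵏ → x⋆`. -/
theorem stmt11 {n : ℕ} (f : EuclideanSpace ℝ (Fin n) → ℝ) (hf : ContDiff ℝ 1 f)
    (g : EuclideanSpace ℝ (Fin n) → EReal)
    (hgp : EProper g) (hglsc : LowerSemicontinuous g) (hgc : EConvexOn g)
    (φ : EuclideanSpace ℝ (Fin n) → EReal)
    (hφ : φ = fun z => (f z : EReal) + g z)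
    (x xbar : ℕ → EuclideanSpace ℝ (Fin n)) (xstar : EuclideanSpace ℝ (Fin n))
    (hmin : ∀ z, φ xstar ≤ φ z)
    (hx : Tendsto x atTop (𝓝 xstar))
    (γ : ℕ → ℝ) (γmin γmax : ℝ) (hγmin : 0 < γmin)
    (hγ : ∀ k, γ k ∈ Set.Icc γmin γmax)
    (hprox : ∀ k, IsProx g (γ k) (x k - γ k • gradient f (x k)) (xbar k))
    (hφx : Tendsto (fun k => φ (x k)) atTop (𝓝 (φ xstar))) :
    Tendsto (fun k => φ (xbar k)) atTop (𝓝 (φ xstar)) := by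
  obtain ⟨hbot, z₀, hz₀⟩ := hgp
  have hγpos : ∀ k, 0 < γ k := fun k => lt_of_lt_of_le hγmin (hγ k).1
  have hγle : ∀ k, γ k ≤ γmax := fun k => (hγ k).2
  have hγmax : 0 < γmax := lt_of_lt_of_le hγmin (le_trans (hγ 0).1 (hγ 0).2)
  -- g xstar is finite
  have hgs_ne_top : g xstar ≠ ⊤ := by
    intro h
    have h1 := hmin z₀
    rw [hφ] at h1
    simp only at h1
    rw [h, EReal.add_top_of_ne_bot (EReal.coe_ne_bot _)] at h1
    have h2 : (f z₀ : EReal) + g z₀ = ⊤ := top_le_iff.mp h1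
    rw [← EReal.coe_toReal hz₀ (hbot z₀), ← EReal.coe_add] at h2
    exact EReal.coe_ne_top _ h2
  set gs := (g xstar).toReal with hgs_def
  have hgs : g xstar = (gs : EReal) := (EReal.coe_toReal hgs_ne_top (hbot xstar)).symm
  -- gradient notation
  set d := gradient f xstar with hd_def
  have hgradcont : Continuous (fun z => gradient f z) := by
    have : (fun z => gradient f z)
        = fun z => (InnerProductSpace.toDual ℝ _).symm (fderiv ℝ f z) := rfl
    rw [this]
    exact (InnerProductSpace.toDual ℝ _).symm.continuous.comp (hf.continuous_fderiv one_ne_zero)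
  -- Fermat: subgradient inequality at xstar
  have key : ∀ z, (gs : EReal) ≤ g z + ((⟪d, z - xstar⟫ : ℝ) : EReal) := by
    intro z
    by_cases hz : g z = ⊤
    · rw [hz, EReal.top_add_coe]; exact le_top
    have hzb := hbot z
    set gz := (g z).toReal with hgz_def
    have hgz : g z = (gz : EReal) := (EReal.coe_toReal hz hzb).symm
    rw [hgz, ← EReal.coe_add, EReal.coe_le_coe_iff]
    set v := z - xstar with hv_def
    have hderiv : HasDerivAt (fun t : ℝ => f (xstar + t • v)) ⟪d, v⟫ 0 := by
      have h1 : HasDerivAt (fun t : ℝ => xstar + t • v) v 0 := by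
        simpa using ((hasDerivAt_id (0:ℝ)).smul_const v).const_add xstar
      have h2 : HasFDerivAt f (fderiv ℝ f xstar) (xstar + (0:ℝ) • v) := by
        rw [zero_smul, add_zero]; exact (hf.differentiable one_ne_zero _).hasFDerivAt
      have h3 : HasDerivAt (fun t : ℝ => f (xstar + t • v)) (fderiv ℝ f xstar v) 0 :=
        h2.comp_hasDerivAt 0 h1
      rwa [show (⟪d, v⟫ : ℝ) = fderiv ℝ f xstar v from InnerProductSpace.toDual_symm_apply]
    have hslope : ∀ t ∈ Set.Ioc (0:ℝ) 1, gs - gz ≤ slope (fun t : ℝ => f (xstar + t • v)) 0 t := by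
      intro t ht
      have ht0 : 0 < t := ht.1
      have hconv := hgc z xstar t (1 - t) (le_of_lt ht0) (by linarith [ht.2]) (by ring)
      have harg : t • z + (1 - t) • xstar = xstar + t • v := by
        rw [hv_def]; module
      rw [harg, hgz, hgs] at hconv
      have hconv' : g (xstar + t • v) ≤ ((t * gz + (1 - t) * gs : ℝ) : EReal) := by
        refine le_trans hconv (le_of_eq ?_)
        push_cast; ring
      have hm := hmin (xstar + t • v)
      rw [hφ] at hm
      simp only at hm
      rw [hgs] at hm
      have hm2 : ((f xstar + gs : ℝ) : EReal)
          ≤ ((f (xstar + t • v) + (t * gz + (1 - t) * gs) : ℝ) : EReal) := by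
        push_cast
        exact le_trans hm (add_le_add_right hconv' _)
      rw [EReal.coe_le_coe_iff] at hm2
      have hreal : t * (gs - gz) ≤ f (xstar + t • v) - f xstar := by nlinarith
      have hzs : f (xstar + (0:ℝ) • v) = f xstar := by rw [zero_smul, add_zero]
      rw [slope_def_field, hzs, sub_zero, le_div_iff₀ ht0]
      nlinarith [hreal]
    have h1 : Tendsto (slope (fun t : ℝ => f (xstar + t • v)) 0) (𝓝[>] 0) (𝓝 ⟪d, v⟫) :=
      (hasDerivAt_iff_tendsto_slope.mp hderiv).mono_left
        (nhdsWithin_mono 0 (fun t ht => Set.mem_compl_singleton_iff.mpr (ne_of_gt ht)))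
    have h2 : gs - gz ≤ ⟪d, v⟫ := by
      refine ge_of_tendsto h1 ?_
      filter_upwards [Ioc_mem_nhdsGT_of_mem ⟨le_refl 0, one_pos⟩] with t ht using hslope t ht
    linarith
  -- notation for the iterates
  set v : ℕ → EuclideanSpace ℝ (Fin n) := fun k => gradient f (x k) with hv_def
  set y : ℕ → EuclideanSpace ℝ (Fin n) := fun k => x k - γ k • v k with hy_def
  -- g (xbar k) is finite
  have hbark_ne_top : ∀ k, g (xbar k) ≠ ⊤ := by
    intro k htop
    have hp := hprox k xstar
    rw [hgs, htop, EReal.top_add_coe] at hp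
    have : ((gs + 1 / (2 * γ k) * ‖xstar - (x k - γ k • v k)‖ ^ 2 : ℝ) : EReal) ≠ ⊤ :=
      EReal.coe_ne_top _
    rw [← EReal.coe_add] at hp
    exact this (top_le_iff.mp hp)
  set gb : ℕ → ℝ := fun k => (g (xbar k)).toReal with hgb_def
  have hgb : ∀ k, g (xbar k) = ((gb k : ℝ) : EReal) :=
    fun k => (EReal.coe_toReal (hbark_ne_top k) (hbot _)).symm
  -- real prox inequality at xstar
  have hA : ∀ k, gb k + 1 / (2 * γ k) * ‖xbar k - y k‖ ^ 2
      ≤ gs + 1 / (2 * γ k) * ‖xstar - y k‖ ^ 2 := by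
    intro k
    have hp := hprox k xstar
    rw [hgs, hgb k, ← EReal.coe_add, ← EReal.coe_add, EReal.coe_le_coe_iff] at hp
    exact hp
  have hB : ∀ k, gs ≤ gb k + ⟪d, xbar k - xstar⟫ := by
    intro k
    have := key (xbar k)
    rw [hgb k, ← EReal.coe_add, EReal.coe_le_coe_iff] at this
    exact this
  -- norm bound
  have hnormbound : ∀ k, ‖xbar k - xstar‖ ≤ 2 * ‖γ k • d - (xstar - y k)‖ := by
    intro k
    set u := xbar k - xstar with hu_def
    set w := xstar - y k with hw_def
    have hexp : ‖xbar k - y k‖ ^ 2 = ‖u‖ ^ 2 + 2 * ⟪u, w⟫ + ‖w‖ ^ 2 := by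
      have : xbar k - y k = u + w := by rw [hu_def, hw_def]; abel
      rw [this, norm_add_sq_real]
    have hγk := hγpos k
    have hAk := hA k
    have hBk := hB k
    rw [hexp, ← hw_def] at hAk
    rw [← hu_def] at hBk
    have hc : 0 < 1 / (2 * γ k) := by positivity
    have h1 : 1 / (2 * γ k) * ‖u‖ ^ 2 ≤ ⟪d - (1 / γ k) • w, u⟫ := by
      have hinn : ⟪d - (1 / γ k) • w, u⟫ = ⟪d, u⟫ - (1 / γ k) * ⟪w, u⟫ := by
        rw [inner_sub_left, real_inner_smul_left]
      have hcomm : ⟪u, w⟫ = ⟪w, u⟫ := real_inner_comm w u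
      rw [hinn]
      have e1 : (1 : ℝ) / γ k = 2 * (1 / (2 * γ k)) := by field_simp
      nlinarith [hAk, hBk, hcomm]
    have h2 : ⟪d - (1 / γ k) • w, u⟫ ≤ ‖d - (1 / γ k) • w‖ * ‖u‖ := real_inner_le_norm _ _
    have h1γ : (1 / γ k) * γ k = 1 := by field_simp
    have h3 : ‖d - (1 / γ k) • w‖ = (1 / γ k) * ‖γ k • d - w‖ := by
      have heq : d - (1 / γ k) • w = (1 / γ k) • (γ k • d - w) := by
        match_scalars <;> field_simp
      rw [heq, norm_smul, Real.norm_eq_abs, abs_of_pos (by positivity : (0:ℝ) < 1 / γ k)]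
    have hcomb : 1 / (2 * γ k) * ‖u‖ ^ 2 ≤ 1 / γ k * ‖γ k • d - w‖ * ‖u‖ := by
      calc 1 / (2 * γ k) * ‖u‖ ^ 2 ≤ ⟪d - (1 / γ k) • w, u⟫ := h1
        _ ≤ ‖d - (1 / γ k) • w‖ * ‖u‖ := h2
        _ = 1 / γ k * ‖γ k • d - w‖ * ‖u‖ := by rw [h3]
    have hmul := mul_le_mul_of_nonneg_left hcomb (le_of_lt (show (0:ℝ) < 2 * γ k by positivity))
    have e2 : 2 * γ k * (1 / (2 * γ k) * ‖u‖ ^ 2) = ‖u‖ ^ 2 := by field_simp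
    have e3 : 2 * γ k * (1 / γ k * ‖γ k • d - w‖ * ‖u‖) = 2 * (‖γ k • d - w‖ * ‖u‖) := by
      field_simp
    rw [e2, e3] at hmul
    rcases eq_or_lt_of_le (norm_nonneg u) with h0 | h0
    · rw [← h0]; positivity
    · nlinarith [hmul, h0]
  -- the bound tends to 0
  have hvlim : Tendsto v atTop (𝓝 d) := (hgradcont.tendsto xstar).comp hx
  have hxlim : Tendsto (fun k => ‖x k - xstar‖) atTop (𝓝 0) := by
    have h := Tendsto.norm
      (hx.sub (tendsto_const_nhds : Tendsto (fun _ : ℕ => xstar) atTop (𝓝 xstar)))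
    simpa using h
  have hvnormlim : Tendsto (fun k => ‖d - v k‖) atTop (𝓝 0) := by
    have h := Tendsto.norm
      ((tendsto_const_nhds : Tendsto (fun _ : ℕ => d) atTop (𝓝 d)).sub hvlim)
    simpa using h
  have hRbound : ∀ k, ‖γ k • d - (xstar - y k)‖ ≤ γmax * ‖d - v k‖ + ‖x k - xstar‖ := by
    intro k
    have he : γ k • d - (xstar - y k) = γ k • (d - v k) + (x k - xstar) := by
      show γ k • d - (xstar - (x k - γ k • v k)) = γ k • (d - v k) + (x k - xstar)
      module
    rw [he]
    calc ‖γ k • (d - v k) + (x k - xstar)‖ ≤ ‖γ k • (d - v k)‖ + ‖x k - xstar‖ :=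
          norm_add_le _ _
      _ = γ k * ‖d - v k‖ + ‖x k - xstar‖ := by
          rw [norm_smul, Real.norm_eq_abs, abs_of_pos (hγpos k)]
      _ ≤ γmax * ‖d - v k‖ + ‖x k - xstar‖ := by
          have := mul_le_mul_of_nonneg_right (hγle k) (norm_nonneg (d - v k))
          linarith
  have hRlim : Tendsto (fun k => γmax * ‖d - v k‖ + ‖x k - xstar‖) atTop (𝓝 0) := by
    have := (hvnormlim.const_mul γmax).add hxlim
    simpa using this
  have hxbarnorm : Tendsto (fun k => ‖xbar k - xstar‖) atTop (𝓝 0) := by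
    apply squeeze_zero (fun k => norm_nonneg _) (fun k => ?_)
      (by simpa using hRlim.const_mul 2)
    calc ‖xbar k - xstar‖ ≤ 2 * ‖γ k • d - (xstar - y k)‖ := hnormbound k
      _ ≤ 2 * (γmax * ‖d - v k‖ + ‖x k - xstar‖) := by
          have := hRbound k; linarith
  have hxbarlim : Tendsto xbar atTop (𝓝 xstar) := by
    rw [tendsto_iff_norm_sub_tendsto_zero]
    exact hxbarnorm
  -- epsilon bound: gb k ≤ gs + ε k
  set ε : ℕ → ℝ := fun k => 1 / γ k * ‖xstar - y k‖ * ‖xbar k - xstar‖ with hε_def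
  have hgb_ub : ∀ k, gb k ≤ gs + ε k := by
    intro k
    set u := xbar k - xstar with hu_def
    set w := xstar - y k with hw_def
    have hexp : ‖xbar k - y k‖ ^ 2 = ‖u‖ ^ 2 + 2 * ⟪u, w⟫ + ‖w‖ ^ 2 := by
      have : xbar k - y k = u + w := by rw [hu_def, hw_def]; abel
      rw [this, norm_add_sq_real]
    have hAk := hA k
    rw [hexp] at hAk
    have hinn : |⟪u, w⟫| ≤ ‖u‖ * ‖w‖ := abs_real_inner_le_norm u w
    have hγk := hγpos k
    have hε : ε k = 1 / γ k * ‖w‖ * ‖u‖ := rfl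
    rw [hε]
    have e1 : (1 : ℝ) / γ k = 2 * (1 / (2 * γ k)) := by field_simp
    have hc : 0 < 1 / (2 * γ k) := by positivity
    nlinarith [abs_le.mp hinn, sq_nonneg ‖u‖, hc.le]
  have hεlim : Tendsto ε atTop (𝓝 0) := by
    have hwbound : ∀ k, ‖xstar - y k‖ ≤ ‖xstar - x k‖ + γmax * ‖v k‖ := by
      intro k
      have hee : xstar - y k = (xstar - x k) + γ k • v k := by
        show xstar - (x k - γ k • v k) = (xstar - x k) + γ k • v k
        module
      rw [hee]
      calc ‖(xstar - x k) + γ k • v k‖ ≤ ‖xstar - x k‖ + ‖γ k • v k‖ := norm_add_le _ _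
        _ = ‖xstar - x k‖ + γ k * ‖v k‖ := by
            rw [norm_smul, Real.norm_eq_abs, abs_of_pos (hγpos k)]
        _ ≤ ‖xstar - x k‖ + γmax * ‖v k‖ := by
            have := mul_le_mul_of_nonneg_right (hγle k) (norm_nonneg (v k)); linarith
    have hMlim : Tendsto (fun k => 1 / γmin * (‖xstar - x k‖ + γmax * ‖v k‖) * ‖xbar k - xstar‖)
        atTop (𝓝 0) := by
      have h1 : Tendsto (fun k => ‖xstar - x k‖) atTop (𝓝 0) := by
        have h := Tendsto.norm
          ((tendsto_const_nhds : Tendsto (fun _ : ℕ => xstar) atTop (𝓝 xstar)).sub hx)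
        simpa using h
      have h2 : Tendsto (fun k => ‖v k‖) atTop (𝓝 ‖d‖) := hvlim.norm
      have h3 : Tendsto (fun k => 1 / γmin * (‖xstar - x k‖ + γmax * ‖v k‖)) atTop
          (𝓝 (1 / γmin * (0 + γmax * ‖d‖))) :=
        ((h1.add (h2.const_mul γmax)).const_mul _)
      have h4 := h3.mul hxbarnorm
      rw [mul_zero] at h4
      exact h4
    apply squeeze_zero (fun k => ?_) (fun k => ?_) hMlim
    · have := hγpos k; positivity
    · show 1 / γ k * ‖xstar - y k‖ * ‖xbar k - xstar‖
          ≤ 1 / γmin * (‖xstar - x k‖ + γmax * ‖v k‖) * ‖xbar k - xstar‖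
      apply mul_le_mul_of_nonneg_right _ (norm_nonneg _)
      have h1 : 1 / γ k ≤ 1 / γmin := by
        apply one_div_le_one_div_of_le hγmin (hγ k).1
      have h2 : ‖xstar - y k‖ ≤ ‖xstar - x k‖ + γmax * ‖v k‖ := hwbound k
      have h0 : (0:ℝ) ≤ 1 / γ k := by have := hγpos k; positivity
      have h0' : (0:ℝ) ≤ ‖xstar - y k‖ := norm_nonneg _
      calc 1 / γ k * ‖xstar - y k‖ ≤ 1 / γmin * ‖xstar - y k‖ :=
            mul_le_mul_of_nonneg_right h1 h0'
        _ ≤ 1 / γmin * (‖xstar - x k‖ + γmax * ‖v k‖) := by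
            apply mul_le_mul_of_nonneg_left h2; positivity
  -- final squeeze in ℝ then transfer to EReal
  set s : ℕ → ℝ := fun k => f (xbar k) + gb k with hs_def
  have hφxbar : ∀ k, φ (xbar k) = ((s k : ℝ) : EReal) := by
    intro k
    rw [hφ]
    simp only
    rw [hgb k, ← EReal.coe_add]
  have hφstar : φ xstar = ((f xstar + gs : ℝ) : EReal) := by
    rw [hφ]; simp only; rw [hgs, ← EReal.coe_add]
  have hlower : ∀ k, f xstar + gs ≤ s k := by
    intro k
    have := hmin (xbar k)
    rw [hφxbar k, hφstar, EReal.coe_le_coe_iff] at this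
    exact this
  have hupper : ∀ k, s k ≤ f (xbar k) + gs + ε k := by
    intro k
    have := hgb_ub k
    show f (xbar k) + gb k ≤ f (xbar k) + gs + ε k
    linarith
  have hflim : Tendsto (fun k => f (xbar k)) atTop (𝓝 (f xstar)) :=
    (hf.continuous.tendsto xstar).comp hxbarlim
  have hulim : Tendsto (fun k => f (xbar k) + gs + ε k) atTop (𝓝 (f xstar + gs)) := by
    have := (hflim.add_const gs).add hεlim
    simpa using this
  have hslim : Tendsto s atTop (𝓝 (f xstar + gs)) :=
    tendsto_of_tendsto_of_tendsto_of_le_of_le tendsto_const_nhds hulim hlower hupper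
  rw [hφstar]
  have : Tendsto (fun k => ((s k : ℝ) : EReal)) atTop (𝓝 ((f xstar + gs : ℝ) : EReal)) := by
    exact (continuous_coe_real_ereal.tendsto _).comp hslim
  exact this.congr (fun k => (hφxbar k).symm)
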